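/- Assume v₀ ≥ 1, u₀ ≤ 0 and (v₀ − E_μ[θ])² ≥ v₀² + u₀. Then the constant veto mechanism defined by ã*(θ) = E_μ[θ] and p̃*(θ) = 0 for all θ ∈ [0,1] is optimal; that is, the principal chooses E_μ[θ] regardless of the state and never uses veto. -/

import Mathlib

open MeasureTheory Set

/-- Principal's ex ante payoff from a veto mechanism `(p, a)`:
`∫ (p θ · u₀ − (1 − p θ) · (a θ − θ)²) dμ(θ)`. -/
noncomputable def vetoPayoff (μ : Measure ℝ) (u₀ : ℝ) (p a : ℝ → ℝ) : ℝ :=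
  ∫ θ, (p θ * u₀ - (1 - p θ) * (a θ - θ) ^ 2) ∂μ

/-- A veto mechanism: a measurable veto probability `p : [0,1] → [0,1]` and a measurable
proposed action `a : [0,1] → [−M, M]`. -/
def IsVetoMechanism (M : ℝ) (p a : ℝ → ℝ) : Prop :=
  Measurable p ∧ Measurable a ∧
    (∀ θ ∈ Set.Icc (0 : ℝ) 1, p θ ∈ Set.Icc (0 : ℝ) 1) ∧
    (∀ θ ∈ Set.Icc (0 : ℝ) 1, a θ ∈ Set.Icc (-M) M)

/-- Incentive compatibility of a veto mechanism: the agent's expected payoff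
`p θ · v₀ + (1 − p θ) · a θ` is constant in the state. -/
def IsICVeto (v₀ : ℝ) (p a : ℝ → ℝ) : Prop :=
  ∃ vhat : ℝ, ∀ θ ∈ Set.Icc (0 : ℝ) 1, p θ * v₀ + (1 - p θ) * a θ = vhat

/-- An optimal veto mechanism: incentive compatible and weakly dominating every
incentive-compatible veto mechanism in principal payoff. -/
def IsOptimalVeto (μ : Measure ℝ) (v₀ u₀ M : ℝ) (p a : ℝ → ℝ) : Prop :=
  IsVetoMechanism M p a ∧ IsICVeto v₀ p a ∧
    ∀ q b : ℝ → ℝ, IsVetoMechanism M q b → IsICVeto v₀ q b →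
      vetoPayoff μ u₀ q b ≤ vetoPayoff μ u₀ p a

/-- **Characterization of the optimal veto mechanism (trivial case, `v₀ ≥ 1`).**
If `v₀ ≥ 1`, `u₀ ≤ 0` and `(v₀ − E_μ[θ])² ≥ v₀² + u₀`, then the constant mechanism
choosing `E_μ[θ]` at every state with no veto is an optimal veto mechanism. -/
theorem optimal_veto_trivial_high_v₀
    (μ : Measure ℝ) [IsProbabilityMeasure μ]
    (hsupp : μ (Icc (0 : ℝ) 1) = 1)
    (hfull : ∀ a b : ℝ, 0 ≤ a → a < b → b ≤ 1 → 0 < μ (Ioo a b))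
    (M v₀ u₀ : ℝ) (hM : 1 < M) (hv₀ : 1 ≤ v₀) (hu₀ : u₀ ≤ 0)
    (Eμ : ℝ) (hEμ : Eμ = ∫ θ, θ ∂μ)
    (hval : v₀ ^ 2 + u₀ ≤ (v₀ - Eμ) ^ 2) :
    IsOptimalVeto μ v₀ u₀ M (fun _ => 0) (fun _ => Eμ) := by
  -- a.e. θ ∈ [0,1]
  have haebd : ∀ᵐ θ ∂μ, θ ∈ Icc (0:ℝ) 1 := by
    have hc : μ (Icc (0:ℝ) 1)ᶜ = 0 := by
      have h := measure_compl (measurableSet_Icc (a := (0:ℝ)) (b := 1)) (measure_ne_top μ _)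
      rw [hsupp, measure_univ] at h
      simpa using h
    rw [MeasureTheory.ae_iff]
    exact hc
  -- integrability helper
  have hint : ∀ (f : ℝ → ℝ), Measurable f → ∀ C : ℝ,
      (∀ θ ∈ Icc (0:ℝ) 1, |f θ| ≤ C) → Integrable f μ := by
    intro f hf C hC
    exact Integrable.mono' (integrable_const C) hf.aestronglyMeasurable
      (haebd.mono fun θ hθ => by simpa [Real.norm_eq_abs] using hC θ hθ)
  have int_id : Integrable (fun θ : ℝ => θ) μ :=
    hint _ measurable_id 1 (fun θ hθ => abs_le.mpr ⟨by linarith [hθ.1], hθ.2⟩)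
  have hEμ0 : 0 ≤ Eμ := hEμ ▸ integral_nonneg_of_ae (haebd.mono fun θ hθ => hθ.1)
  have hEμ1 : Eμ ≤ 1 := by
    rw [hEμ]
    calc ∫ θ, θ ∂μ ≤ ∫ _, (1:ℝ) ∂μ :=
          integral_mono_ae int_id (integrable_const 1) (haebd.mono fun θ hθ => hθ.2)
      _ = 1 := by simp
  have hI1int : Integrable (fun θ : ℝ => -(Eμ - θ) ^ 2) μ := by
    refine hint _ (((measurable_const.sub measurable_id).pow_const 2).neg) 1 (fun θ hθ => ?_)
    rw [abs_le]
    constructor <;> nlinarith [hθ.1, hθ.2, sq_nonneg (Eμ - θ)]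
  refine ⟨⟨measurable_const, measurable_const,
      fun θ _ => ⟨le_rfl, zero_le_one⟩,
      fun θ _ => ⟨by linarith, by linarith⟩⟩,
    ⟨Eμ, fun θ _ => by ring⟩, ?_⟩
  intro q b hqb hICqb
  obtain ⟨hqm, hbm, hqI, hbI⟩ := hqb
  obtain ⟨vhat, hIC⟩ := hICqb
  set K : ℝ := (v₀ - Eμ)^2 + 2*(v₀-Eμ)*(vhat - v₀) - 2*(vhat - v₀)*v₀
      - (v₀-Eμ)*Eμ - (v₀-Eμ)*v₀ with hK
  set L : ℝ := 2*(vhat - v₀) + 2*(v₀-Eμ) with hL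
  have hFmeas : Measurable (fun θ => q θ * u₀ - (1 - q θ) * (b θ - θ) ^ 2) :=
    (hqm.mul_const u₀).sub ((measurable_const.sub hqm).mul
      ((hbm.sub measurable_id).pow_const 2))
  have hFint : Integrable (fun θ => q θ * u₀ - (1 - q θ) * (b θ - θ) ^ 2) μ := by
    refine hint _ hFmeas (|u₀| + (M + 1) ^ 2) (fun θ hθ => ?_)
    obtain ⟨hq0, hq1⟩ := hqI θ hθ
    obtain ⟨hb1, hb2⟩ := hbI θ hθ
    have h1 : (b θ - θ) ^ 2 ≤ (M + 1) ^ 2 :=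
      sq_le_sq' (by linarith [hθ.2]) (by linarith [hθ.1])
    have h2 : 0 ≤ (1 - q θ) * (b θ - θ) ^ 2 := mul_nonneg (by linarith) (sq_nonneg _)
    have h3 : (1 - q θ) * (b θ - θ) ^ 2 ≤ (M + 1) ^ 2 := by
      nlinarith [sq_nonneg (b θ - θ)]
    have h4 : 0 ≤ q θ * (-u₀) := mul_nonneg hq0 (by linarith)
    have h5 : 0 ≤ (1 - q θ) * (-u₀) := mul_nonneg (by linarith) (by linarith)
    rw [abs_le]
    constructor <;> nlinarith [neg_abs_le u₀, le_abs_self u₀]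
  have hI2int : Integrable (fun θ : ℝ => K + L * θ) μ :=
    (integrable_const K).add (int_id.const_mul L)
  -- pointwise bound
  have hptwise : ∀ᵐ θ ∂μ, q θ * u₀ - (1 - q θ) * (b θ - θ) ^ 2 ≤
      -(Eμ - θ) ^ 2 + (K + L * θ) := by
    refine haebd.mono fun θ hθ => ?_
    obtain ⟨hq0, hq1⟩ := hqI θ hθ
    have hic := hIC θ hθ
    rw [hK, hL, ← hic]
    nlinarith [mul_nonneg (by linarith : (0:ℝ) ≤ 1 - q θ)
        (sq_nonneg ((b θ - v₀) + (v₀ - Eμ))),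
      mul_nonneg hq0 (mul_nonneg hθ.1 (by linarith [hθ.2] : (0:ℝ) ≤ 2*v₀ - θ)),
      mul_nonneg hq0 (by linarith : (0:ℝ) ≤ (v₀ - Eμ)^2 - (v₀^2 + u₀))]
  have key : vetoPayoff μ u₀ q b ≤ ∫ θ, (-(Eμ - θ) ^ 2 + (K + L * θ)) ∂μ :=
    integral_mono_ae hFint (hI1int.add hI2int) hptwise
  have hsplit : ∫ θ, (-(Eμ - θ) ^ 2 + (K + L * θ)) ∂μ
      = (∫ θ, -(Eμ - θ) ^ 2 ∂μ) + ∫ θ, (K + L * θ) ∂μ :=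
    integral_add hI1int hI2int
  have hI2val : ∫ θ, (K + L * θ) ∂μ = 0 := by
    rw [integral_add (integrable_const K) (int_id.const_mul L),
      integral_const, integral_const_mul, ← hEμ]
    simp only [measure_univ, probReal_univ, ENNReal.toReal_one, smul_eq_mul, one_mul]
    rw [hK, hL]; ring
  have hours : vetoPayoff μ u₀ (fun _ => 0) (fun _ => Eμ) = ∫ θ, -(Eμ - θ) ^ 2 ∂μ := by
    unfold vetoPayoff
    refine integral_congr_ae (Filter.Eventually.of_forall fun θ => ?_)
    ring
  rw [hours]
  calc vetoPayoff μ u₀ q b ≤ _ := key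
    _ = _ := hsplit
    _ = ∫ θ, -(Eμ - θ) ^ 2 ∂μ := by rw [hI2val, add_zero]
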